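/- Let ≤ be a well-order on W and let Π be a ≤-compatible term-rewriting system on V = W →₀ k. The following are equivalent: (1) Π is convergent; (2) Π is confluent; (3) V is the internal direct sum of the subspaces k·Irr(Π) and I_Π, i.e., k·Irr(Π) + I_Π = V and k·Irr(Π) ∩ I_Π = 0. -/

import Mathlib

/-- One-step rewriting relation of a term-rewriting system `S ⊆ W × (W →₀ k)`. -/
def RewStep {k W : Type*} [Field k] (S : Set (W × (W →₀ k))) (f g : W →₀ k) : Prop :=
  ∃ t v, (t, v) ∈ S ∧ f t ≠ 0 ∧ g = f - Finsupp.single t (f t) + f t • v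

/-- A rewriting system is `≤`-compatible if every monomial in the support of a
right-hand side is strictly smaller than the left-hand side. -/
def RewCompatible {k W : Type*} [Field k] [LinearOrder W] (S : Set (W × (W →₀ k))) : Prop :=
  ∀ p ∈ S, ∀ w ∈ (p.2 : W →₀ k).support, w < p.1

/-- Termination: there is no infinite chain of one-step rewritings. -/
def RewTerminating {k W : Type*} [Field k] (S : Set (W × (W →₀ k))) : Prop :=
  ¬ ∃ f : ℕ → (W →₀ k), ∀ n, RewStep S (f n) (f (n + 1))

/-- Confluence: any two rewritings of a common element are joinable. -/
def RewConfluent {k W : Type*} [Field k] (S : Set (W × (W →₀ k))) : Prop :=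
  ∀ f g₁ g₂ : W →₀ k, Relation.ReflTransGen (RewStep S) f g₁ →
    Relation.ReflTransGen (RewStep S) f g₂ →
      ∃ h, Relation.ReflTransGen (RewStep S) g₁ h ∧ Relation.ReflTransGen (RewStep S) g₂ h

/-- The linear span `I_S` of the elements `δ_t - v` for the rules `(t, v)` of `S`. -/
noncomputable def RewIdeal {k W : Type*} [Field k] (S : Set (W × (W →₀ k))) : Submodule k (W →₀ k) :=
  Submodule.span k {x : W →₀ k | ∃ p ∈ S, x = Finsupp.single p.1 (1 : k) - p.2}

/-- `Irr(S)`: the set of basis elements that are not the left-hand side of any rule. -/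
def RewIrr {k W : Type*} [Field k] (S : Set (W × (W →₀ k))) : Set W :=
  {w | ∀ v, (w, v) ∉ S}

/-- `k·Irr(S)`: the linear span of the irreducible basis elements. -/
noncomputable def RewIrrSpan {k W : Type*} [Field k] (S : Set (W × (W →₀ k))) : Submodule k (W →₀ k) :=
  Submodule.span k ((fun w => Finsupp.single w (1 : k)) '' RewIrr S)

set_option linter.unusedSectionVars false

section Aux

open Relation

variable {k W : Type*} [Field k] [LinearOrder W] [WellFoundedLT W]
variable (S : Set (W × (W →₀ k)))

/-- Joinability. -/
def RewJoin (f g : W →₀ k) : Prop :=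
  ∃ h, Relation.ReflTransGen (RewStep S) f h ∧ Relation.ReflTransGen (RewStep S) g h

lemma rewJoin_refl (f : W →₀ k) : RewJoin S f f := ⟨f, .refl, .refl⟩

lemma rewJoin_symm {f g : W →₀ k} (h : RewJoin S f g) : RewJoin S g f := by
  obtain ⟨u, h1, h2⟩ := h; exact ⟨u, h2, h1⟩

lemma rew_vt_zero (hS : RewCompatible S) {t : W} {v : W →₀ k} (hmem : (t, v) ∈ S) : v t = 0 := by
  by_contra hv
  exact lt_irrefl t (hS (t, v) hmem t (Finsupp.mem_support_iff.2 hv))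

lemma rew_v_high (hS : RewCompatible S) {t : W} {v : W →₀ k} (hmem : (t, v) ∈ S)
    {d : W} (hd : t < d) : v d = 0 := by
  by_contra hv
  exact absurd (hS (t, v) hmem d (Finsupp.mem_support_iff.2 hv)) (not_lt.2 hd.le)

private lemma rew_s_wf : WellFounded (fun a b : k => a = 0 ∧ b ≠ 0) := by
  constructor
  intro a
  constructor
  rintro b ⟨rfl, _⟩
  constructor
  rintro c ⟨_, h⟩
  exact absurd rfl h

lemma rewStep_wf (hS : RewCompatible S) :
    WellFounded (fun g f : W →₀ k => RewStep S f g) := by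
  have hwf : WellFounded (Finsupp.Lex (fun a b : W => b < a) (fun a b : k => a = 0 ∧ b ≠ 0)) := by
    refine Finsupp.Lex.wellFounded' (fun n h => h.2 rfl) rew_s_wf ?_
    exact wellFounded_lt
  refine Subrelation.wf ?_ hwf
  rintro g f ⟨t, v, hmem, hft, rfl⟩
  rw [Finsupp.lex_def]
  refine ⟨t, fun d hd => ?_, ?_, hft⟩
  · simp [Finsupp.single_apply, ne_of_lt hd, rew_v_high S hS hmem hd]
  · simp [rew_vt_zero S hS hmem]

lemma rew_terminating (hS : RewCompatible S) : RewTerminating S := by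
  rintro ⟨f, hf⟩
  have key : ∀ a : W →₀ k, ∀ n, f n ≠ a := by
    intro a
    refine (rewStep_wf S hS).induction (C := fun a => ∀ n, f n ≠ a) a ?_
    intro x IH n hx
    exact IH (f (n + 1)) (hx ▸ hf n) (n + 1) rfl
  exact key (f 0) 0 rfl

lemma mem_rewIrrSpan_iff {f : W →₀ k} :
    f ∈ RewIrrSpan S ↔ ∀ w ∈ f.support, w ∈ RewIrr S := by
  rw [RewIrrSpan, ← Finsupp.supported_eq_span_single, Finsupp.mem_supported]
  exact Set.subset_def.symm ▸ Iff.rfl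

lemma rew_normal_no_step {f g : W →₀ k} (hf : f ∈ RewIrrSpan S) (h : RewStep S f g) : False := by
  obtain ⟨t, v, hmem, hft, _⟩ := h
  exact (mem_rewIrrSpan_iff S).mp hf t (Finsupp.mem_support_iff.2 hft) v hmem

lemma rew_normal_rtg {f g : W →₀ k} (hf : f ∈ RewIrrSpan S)
    (h : Relation.ReflTransGen (RewStep S) f g) : g = f := by
  induction h with
  | refl => rfl
  | tail hbc hcd ih => exact absurd (ih ▸ hcd) (fun hh => rew_normal_no_step S hf hh)

lemma rew_exists_normal (hS : RewCompatible S) (f : W →₀ k) :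
    ∃ g, Relation.ReflTransGen (RewStep S) f g ∧ g ∈ RewIrrSpan S := by
  refine (rewStep_wf S hS).induction
    (C := fun f => ∃ g, Relation.ReflTransGen (RewStep S) f g ∧ g ∈ RewIrrSpan S) f ?_
  intro x IH
  by_cases hx : x ∈ RewIrrSpan S
  · exact ⟨x, .refl, hx⟩
  · rw [mem_rewIrrSpan_iff] at hx
    push_neg at hx
    obtain ⟨t, ht, htirr⟩ := hx
    simp only [RewIrr, Set.mem_setOf_eq, not_forall, not_not] at htirr
    obtain ⟨v, hv⟩ := htirr
    have hstep : RewStep S x (x - Finsupp.single t (x t) + x t • v) :=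
      ⟨t, v, hv, Finsupp.mem_support_iff.1 ht, rfl⟩
    obtain ⟨n, hn, hmem⟩ := IH _ hstep
    exact ⟨n, .head hstep hn, hmem⟩

lemma rew_step_sub_mem {f g : W →₀ k} (h : RewStep S f g) : f - g ∈ RewIdeal S := by
  obtain ⟨t, v, hmem, hft, rfl⟩ := h
  have hgen : Finsupp.single t (1 : k) - v ∈ RewIdeal S :=
    Submodule.subset_span ⟨(t, v), hmem, rfl⟩
  have heq : f - (f - Finsupp.single t (f t) + f t • v)
      = f t • (Finsupp.single t (1 : k) - v) := by
    rw [smul_sub, Finsupp.smul_single, smul_eq_mul, mul_one]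
    abel
  rw [heq]
  exact Submodule.smul_mem _ _ hgen

lemma rew_rtg_sub_mem {f g : W →₀ k} (h : Relation.ReflTransGen (RewStep S) f g) :
    f - g ∈ RewIdeal S := by
  induction h with
  | refl => simpa using (RewIdeal S).zero_mem
  | tail hbc hcd ih =>
      have h2 := rew_step_sub_mem S hcd
      have := add_mem ih h2
      simpa [sub_add_sub_cancel] using this

lemma rew_step_add (hS : RewCompatible S) {f g : W →₀ k} (h : RewStep S f g) (p : W →₀ k) :
    RewJoin S (f + p) (g + p) := by
  obtain ⟨t, v, hmem, hft, rfl⟩ := h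
  have hvt : v t = 0 := rew_vt_zero S hS hmem
  have hfp : (f + p) t = f t + p t := by simp
  refine ⟨(f + p) - Finsupp.single t (f t + p t) + (f t + p t) • v, ?_, ?_⟩
  · by_cases hc : f t + p t = 0
    · have : (f + p) - Finsupp.single t (f t + p t) + (f t + p t) • v = f + p := by
        rw [hc]; simp
      rw [this]
    · exact ReflTransGen.single ⟨t, v, hmem, by rw [hfp]; exact hc, by rw [hfp]⟩
  · have hgp : (f - Finsupp.single t (f t) + f t • v + p) t = p t := by
      simp [hvt]
    by_cases hp : p t = 0
    · have : (f + p) - Finsupp.single t (f t + p t) + (f t + p t) • v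
          = f - Finsupp.single t (f t) + f t • v + p := by
        rw [hp]; simp only [add_zero]; abel
      rw [this]
    · refine ReflTransGen.single ⟨t, v, hmem, by rw [hgp]; exact hp, ?_⟩
      rw [hgp, Finsupp.single_add, add_smul]
      abel

lemma rew_join_trans (hC : RewConfluent S) {a b c : W →₀ k}
    (h1 : RewJoin S a b) (h2 : RewJoin S b c) : RewJoin S a c := by
  obtain ⟨u, hau, hbu⟩ := h1
  obtain ⟨w, hbw, hcw⟩ := h2
  obtain ⟨m, hum, hwm⟩ := hC b u w hbu hbw
  exact ⟨m, hau.trans hum, hcw.trans hwm⟩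

lemma rew_rtg_add (hS : RewCompatible S) (hC : RewConfluent S) {f g : W →₀ k}
    (h : Relation.ReflTransGen (RewStep S) f g) (p : W →₀ k) : RewJoin S (f + p) (g + p) := by
  induction h with
  | refl => exact rewJoin_refl S _
  | tail hbc hcd ih => exact rew_join_trans S hC ih (rew_step_add S hS hcd p)

lemma rew_join_add (hS : RewCompatible S) (hC : RewConfluent S) {f g : W →₀ k}
    (h : RewJoin S f g) (p : W →₀ k) : RewJoin S (f + p) (g + p) := by
  obtain ⟨u, h1, h2⟩ := h
  exact rew_join_trans S hC (rew_rtg_add S hS hC h1 p)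
    (rewJoin_symm S (rew_rtg_add S hS hC h2 p))

lemma rew_step_smul {f g : W →₀ k} (h : RewStep S f g) {c : k} (hc : c ≠ 0) :
    RewStep S (c • f) (c • g) := by
  obtain ⟨t, v, hmem, hft, rfl⟩ := h
  refine ⟨t, v, hmem, ?_, ?_⟩
  · simpa using mul_ne_zero hc hft
  · have hcf : (c • f) t = c * f t := by simp
    rw [hcf, smul_add, smul_sub, Finsupp.smul_single, smul_eq_mul, smul_smul]

lemma rew_rtg_smul {f g : W →₀ k} (h : Relation.ReflTransGen (RewStep S) f g) {c : k}
    (hc : c ≠ 0) : Relation.ReflTransGen (RewStep S) (c • f) (c • g) := by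
  induction h with
  | refl => exact .refl
  | tail hbc hcd ih => exact ih.tail (rew_step_smul S hcd hc)

lemma rew_ideal_join_zero (hS : RewCompatible S) (hC : RewConfluent S) :
    ∀ x ∈ RewIdeal S, RewJoin S x 0 := by
  intro x hx
  refine Submodule.span_induction ?_ ?_ ?_ ?_ hx
  · rintro y ⟨⟨t, v⟩, hmem, rfl⟩
    have hvt : v t = 0 := rew_vt_zero S hS hmem
    have hft : (Finsupp.single t (1 : k) - v) t = 1 := by simp [hvt]
    have hstep : RewStep S (Finsupp.single t (1 : k) - v) 0 := by
      refine ⟨t, v, hmem, by rw [hft]; exact one_ne_zero, ?_⟩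
      rw [hft, one_smul]
      abel
    exact ⟨0, ReflTransGen.single hstep, .refl⟩
  · exact rewJoin_refl S 0
  · intro a b _ _ ja jb
    have h1 : RewJoin S (a + b) (0 + b) := rew_join_add S hS hC ja b
    rw [zero_add] at h1
    exact rew_join_trans S hC h1 jb
  · intro c a _ ja
    by_cases hc : c = 0
    · rw [hc, zero_smul]; exact rewJoin_refl S 0
    · obtain ⟨u, h1, h2⟩ := ja
      refine ⟨c • u, rew_rtg_smul S h1 hc, ?_⟩
      have := rew_rtg_smul S h2 hc
      rwa [smul_zero] at this

lemma rew_inter_bot (hS : RewCompatible S) (hC : RewConfluent S) :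
    RewIrrSpan S ⊓ RewIdeal S = ⊥ := by
  rw [eq_bot_iff]
  rintro x ⟨hx1, hx2⟩
  obtain ⟨u, hxu, h0u⟩ := rew_ideal_join_zero S hS hC x hx2
  have hu0 : u = 0 := rew_normal_rtg S (zero_mem _) h0u
  have hxu' : u = x := rew_normal_rtg S hx1 hxu
  rw [Submodule.mem_bot, ← hxu', hu0]

lemma rew_sup_top (hS : RewCompatible S) : RewIrrSpan S ⊔ RewIdeal S = ⊤ := by
  rw [eq_top_iff]
  intro f _
  obtain ⟨g, hfg, hg⟩ := rew_exists_normal S hS f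
  have : f = g + (f - g) := by abel
  rw [this]
  exact Submodule.add_mem _ (Submodule.mem_sup_left hg)
    (Submodule.mem_sup_right (rew_rtg_sub_mem S hfg))

lemma rew_confluent_of (hS : RewCompatible S) (hint : RewIrrSpan S ⊓ RewIdeal S = ⊥) :
    RewConfluent S := by
  intro f g₁ g₂ h1 h2
  obtain ⟨n₁, hg1, hn1⟩ := rew_exists_normal S hS g₁
  obtain ⟨n₂, hg2, hn2⟩ := rew_exists_normal S hS g₂
  have hmem : n₁ - n₂ ∈ RewIrrSpan S ⊓ RewIdeal S := by
    constructor
    · exact sub_mem hn1 hn2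
    · have ha : f - n₁ ∈ RewIdeal S := rew_rtg_sub_mem S (h1.trans hg1)
      have hb : f - n₂ ∈ RewIdeal S := rew_rtg_sub_mem S (h2.trans hg2)
      have := sub_mem hb ha
      have heq : f - n₂ - (f - n₁) = n₁ - n₂ := by abel
      rwa [heq] at this
  rw [hint, Submodule.mem_bot, sub_eq_zero] at hmem
  exact ⟨n₁, hg1, hmem ▸ hg2⟩

end Aux

/-- For a `≤`-compatible rewriting system over a well-ordered set, the following are
equivalent: (1) the system is convergent (terminating and confluent); (2) it is
confluent; (3) `V` is the internal direct sum of `k·Irr(S)` and `I_S`. -/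
theorem convergent_iff_confluent_iff_direct_sum {k W : Type*} [Field k] [LinearOrder W]
    [WellFoundedLT W] (S : Set (W × (W →₀ k))) (hS : RewCompatible S) :
    ((RewTerminating S ∧ RewConfluent S) ↔ RewConfluent S) ∧
      (RewConfluent S ↔
        (RewIrrSpan S ⊔ RewIdeal S = ⊤ ∧ RewIrrSpan S ⊓ RewIdeal S = ⊥)) := by
  refine ⟨⟨fun h => h.2, fun h => ⟨rew_terminating S hS, h⟩⟩, ?_, ?_⟩
  · intro hC
    exact ⟨rew_sup_top S hS, rew_inter_bot S hS hC⟩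
  · rintro ⟨_, hint⟩
    exact rew_confluent_of S hS hint
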